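/- Along any solution of the dynamical system da/dt = Bc, dB/dt = a c^T, dc/dt = B^T a, the energy E = a^T B c satisfies E'(t) = ‖a'(t)‖² + ‖c'(t)‖² + ‖a(t)‖² ‖c(t)‖². -/

import Mathlib

/-- Along any solution, the energy `E = aᵀ B c` satisfies
`E' = ‖a'‖² + ‖c'‖² + ‖a‖² ‖c‖²`. -/
theorem stmt_3 (m : ℕ) (a c : ℝ → Fin m → ℝ) (B : ℝ → Fin m → Fin m → ℝ)
    (ha : ∀ t i, HasDerivAt (fun s => a s i) (∑ j, B t i j * c t j) t)
    (hB : ∀ t i j, HasDerivAt (fun s => B s i j) (a t i * c t j) t)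
    (hc : ∀ t j, HasDerivAt (fun s => c s j) (∑ i, B t i j * a t i) t)
    (E : ℝ → ℝ) (hE : ∀ t, E t = ∑ i, ∑ j, a t i * B t i j * c t j) :
    ∀ t : ℝ,
      HasDerivAt E
        ((∑ i, (∑ j, B t i j * c t j) ^ 2) + (∑ j, (∑ i, B t i j * a t i) ^ 2)
          + (∑ i, a t i ^ 2) * (∑ j, c t j ^ 2)) t := by
  intro t
  have hfun : E = fun s => ∑ i, ∑ j, a s i * B s i j * c s j := funext hE
  rw [hfun]
  have key : HasDerivAt (fun s => ∑ i, ∑ j, a s i * B s i j * c s j)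
      (∑ i, ∑ j, (((∑ k, B t i k * c t k) * B t i j + a t i * (a t i * c t j)) * c t j
        + a t i * B t i j * (∑ k, B t k j * a t k))) t := by
    apply HasDerivAt.fun_sum
    intro i _
    apply HasDerivAt.fun_sum
    intro j _
    exact (((ha t i).mul (hB t i j)).mul (hc t j))
  convert key using 1
  have h1 : ∀ i, (∑ j, (∑ k, B t i k * c t k) * B t i j * c t j)
      = (∑ j, B t i j * c t j) ^ 2 := by
    intro i
    rw [sq, Finset.mul_sum]
    exact Finset.sum_congr rfl fun j _ => by ring
  have h2 : (∑ i, ∑ j, a t i * (a t i * c t j) * c t j)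
      = (∑ i, a t i ^ 2) * (∑ j, c t j ^ 2) := by
    rw [Finset.sum_mul]
    refine Finset.sum_congr rfl fun i _ => ?_
    rw [Finset.mul_sum]
    exact Finset.sum_congr rfl fun j _ => by ring
  have h3 : (∑ i, ∑ j, a t i * B t i j * (∑ k, B t k j * a t k))
      = ∑ j, (∑ i, B t i j * a t i) ^ 2 := by
    rw [Finset.sum_comm]
    refine Finset.sum_congr rfl fun j _ => ?_
    rw [sq, ← Finset.sum_mul]
    congr 1
    exact Finset.sum_congr rfl fun i _ => by ring
  simp only [add_mul, Finset.sum_add_distrib]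
  rw [h2, h3]
  simp only [h1]
  ring
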